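/- Let ϖ_X, ϖ_C, γ be real numbers with γ ≠ 0 and ϖ_C ≠ 0. Set η = ϖ_X·ϖ_C/γ², ζ = ϖ_X − γ²/ϖ_C, and α = 2ζ − ϖ_X. Then the inequality (γ² − (α + ζ)·(k² − ϖ_C))·(γ² − (α − ζ)·(k² − ϖ_C)) ≥ 0 holds for all real k if and only if either (ϖ_C < 0 and η ≤ 1) or (ϖ_C > 0 and 1 ≤ η ≤ 3/2). -/

import Mathlib

/-- First stability condition at the far-field value `ζ = ϖX − γ²/ϖC`: the constant term
of the dispersion quartic, in factored form, is nonnegative for all modes `k` if and only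
if `(ϖC < 0 and η ≤ 1)` or `(ϖC > 0 and 1 ≤ η ≤ 3/2)`, where `η = ϖX·ϖC/γ²`. -/
theorem first_stability_condition_regimes
    (ϖX ϖC γ : ℝ) (hγ : γ ≠ 0) (hϖC : ϖC ≠ 0) :
    (∀ k : ℝ,
      (γ ^ 2 - ((2 * (ϖX - γ ^ 2 / ϖC) - ϖX) + (ϖX - γ ^ 2 / ϖC)) * (k ^ 2 - ϖC))
        * (γ ^ 2 - ((2 * (ϖX - γ ^ 2 / ϖC) - ϖX) - (ϖX - γ ^ 2 / ϖC)) * (k ^ 2 - ϖC))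
        ≥ 0)
    ↔ ((ϖC < 0 ∧ ϖX * ϖC / γ ^ 2 ≤ 1) ∨
       (ϖC > 0 ∧ 1 ≤ ϖX * ϖC / γ ^ 2 ∧ ϖX * ϖC / γ ^ 2 ≤ 3/2)) := by
  have hγ2 : (0:ℝ) < γ ^ 2 := by positivity
  have hC2 : (0:ℝ) < ϖC ^ 2 := by positivity
  set a : ℝ := 2 * ϖC * (ϖX * ϖC - γ ^ 2) with ha
  set b : ℝ := 2 * (ϖX * ϖC) - 3 * γ ^ 2 with hb
  have key : ∀ k : ℝ,
      (γ ^ 2 - ((2 * (ϖX - γ ^ 2 / ϖC) - ϖX) + (ϖX - γ ^ 2 / ϖC)) * (k ^ 2 - ϖC))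
        * (γ ^ 2 - ((2 * (ϖX - γ ^ 2 / ϖC) - ϖX) - (ϖX - γ ^ 2 / ϖC)) * (k ^ 2 - ϖC))
      = γ ^ 2 / ϖC ^ 2 * (k ^ 2 * (a - b * k ^ 2)) := by
    intro k
    rw [ha, hb]
    field_simp
    ring
  have step1 : (∀ k : ℝ,
      (γ ^ 2 - ((2 * (ϖX - γ ^ 2 / ϖC) - ϖX) + (ϖX - γ ^ 2 / ϖC)) * (k ^ 2 - ϖC))
        * (γ ^ 2 - ((2 * (ϖX - γ ^ 2 / ϖC) - ϖX) - (ϖX - γ ^ 2 / ϖC)) * (k ^ 2 - ϖC))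
        ≥ 0) ↔ ∀ k : ℝ, k ^ 2 * (a - b * k ^ 2) ≥ 0 := by
    have hpos : (0:ℝ) < γ ^ 2 / ϖC ^ 2 := by positivity
    constructor
    · intro h k
      have := h k
      rw [key k] at this
      exact nonneg_of_mul_nonneg_right this hpos
    · intro h k
      rw [key k]
      exact mul_nonneg hpos.le (h k)
  have step2 : (∀ k : ℝ, k ^ 2 * (a - b * k ^ 2) ≥ 0) ↔ (0 ≤ a ∧ b ≤ 0) := by
    constructor
    · intro h
      constructor
      · by_contra h'
        push_neg at h'
        set t : ℝ := -a / (|b| + 1) with ht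
        have hbb : (0:ℝ) < |b| + 1 := by positivity
        have ht0 : 0 < t := by
          rw [ht]; exact div_pos (by linarith) hbb
        have hk2 : (Real.sqrt t) ^ 2 = t := Real.sq_sqrt ht0.le
        have h1 := h (Real.sqrt t)
        rw [hk2] at h1
        have htv : (|b| + 1) * t = -a := by
          rw [ht]; field_simp
        have hble : b ≥ -|b| := neg_abs_le b
        have habt : a - b * t < 0 := by
          nlinarith [abs_nonneg b]
        nlinarith
      · by_contra h'
        push_neg at h'
        set t : ℝ := (|a| + 1) / b with ht
        have ht0 : 0 < t := div_pos (by positivity) h'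
        have hk2 : (Real.sqrt t) ^ 2 = t := Real.sq_sqrt ht0.le
        have h1 := h (Real.sqrt t)
        rw [hk2] at h1
        have htv : b * t = |a| + 1 := by
          rw [ht]; field_simp
        have hale : a ≤ |a| := le_abs_self a
        have habt : a - b * t < 0 := by linarith
        nlinarith
    · rintro ⟨ha0, hb0⟩ k
      have h1 : (0:ℝ) ≤ k ^ 2 := sq_nonneg k
      have h2 : (0:ℝ) ≤ k ^ 2 * k ^ 2 := mul_nonneg h1 h1
      nlinarith [mul_nonneg ha0 h1, mul_nonneg (neg_nonneg.2 hb0) h2]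
  rw [step1, step2]
  have hd1 : ϖX * ϖC / γ ^ 2 ≤ 1 ↔ ϖX * ϖC ≤ γ ^ 2 := div_le_one hγ2
  have hd2 : 1 ≤ ϖX * ϖC / γ ^ 2 ↔ γ ^ 2 ≤ ϖX * ϖC := one_le_div hγ2
  have hd3 : ϖX * ϖC / γ ^ 2 ≤ 3 / 2 ↔ ϖX * ϖC ≤ 3 / 2 * γ ^ 2 := div_le_iff₀ hγ2
  have hbiff : b ≤ 0 ↔ ϖX * ϖC ≤ 3 / 2 * γ ^ 2 := by rw [hb]; constructor <;> intro <;> linarith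
  rcases hϖC.lt_or_gt with hC | hC
  · have haiff : 0 ≤ a ↔ ϖX * ϖC ≤ γ ^ 2 := by
      rw [ha]
      constructor
      · intro h; nlinarith
      · intro h; nlinarith
    constructor
    · rintro ⟨ha0, -⟩
      exact Or.inl ⟨hC, hd1.mpr (haiff.mp ha0)⟩
    · rintro (⟨-, h1⟩ | ⟨h1, -⟩)
      · have hx := hd1.mp h1
        exact ⟨haiff.mpr hx, hbiff.mpr (by linarith)⟩
      · exact absurd hC (not_lt.2 h1.le)
  · have haiff : 0 ≤ a ↔ γ ^ 2 ≤ ϖX * ϖC := by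
      rw [ha]
      constructor
      · intro h; nlinarith
      · intro h; nlinarith
    constructor
    · rintro ⟨ha0, hb0⟩
      exact Or.inr ⟨hC, hd2.mpr (haiff.mp ha0), hd3.mpr (hbiff.mp hb0)⟩
    · rintro (⟨h1, -⟩ | ⟨-, h1, h2⟩)
      · exact absurd hC (not_lt.2 h1.le)
      · exact ⟨haiff.mpr (hd2.mp h1), hbiff.mpr (hd3.mp h2)⟩
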